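/- Let m be a nonnegative integer and let λ be an m-asymmetric partition, i.e., λ has Frobenius coordinates (α | α + m) for some strict partition α (meaning λ_i - i = α_i and λ'_i - i = α_i + m for 1 ≤ i ≤ rank(λ)). Then 2(k(λ) - k(λ')) = m·|λ|, where k(μ) = Σ_i (i-1)μ_i and |λ| is the sum of the parts of λ. -/

import Mathlib

open Finset


/-- A Young diagram `μ` is `m`-asymmetric if its Frobenius coordinates `(α|β)` satisfy
`β i = α i + m` for all `i` up to the rank; with 0-indexed diagonal cells `(i,i) ∈ μ`,
`α i = μ.rowLen i - i - 1` and `β i = μ.colLen i - i - 1`, this says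
`μ.colLen i = μ.rowLen i + m`. -/
def YoungDiagram.IsAsymmetric (m : ℕ) (μ : YoungDiagram) : Prop :=
  ∀ i : ℕ, (i, i) ∈ μ → μ.colLen i = μ.rowLen i + m

lemma gauss (n : ℕ) : (∑ t ∈ Finset.range n, (t : ℤ)) * 2 = n * (n - 1) := by
  induction n with
  | zero => simp
  | succ k ih =>
    rw [Finset.sum_range_succ]
    push_cast
    ring_nf
    ring_nf at ih
    linarith

lemma fiber_eq (μ : YoungDiagram) (r : ℕ) :
    μ.cells.filter (fun u => min u.1 u.2 = r) =
      ((Finset.Ico r (μ.rowLen r)).image fun j => (r, j)) ∪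
      ((Finset.Ico (r+1) (μ.colLen r)).image fun i => (i, r)) := by
  ext ⟨i, j⟩
  simp only [Finset.mem_filter, YoungDiagram.mem_cells, Finset.mem_union, Finset.mem_image,
    Finset.mem_Ico, Prod.mk.injEq]
  constructor
  · rintro ⟨hm, hmin⟩
    rcases le_or_gt i j with hij | hij
    · left
      refine ⟨j, ⟨?_, ?_⟩, ?_, rfl⟩
      · omega
      · rw [min_eq_left hij] at hmin; subst hmin
        exact YoungDiagram.mem_iff_lt_rowLen.mp hm
      · omega
    · right
      refine ⟨i, ⟨?_, ?_⟩, rfl, ?_⟩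
      · omega
      · rw [min_eq_right hij.le] at hmin; subst hmin
        exact YoungDiagram.mem_iff_lt_colLen.mp hm
      · omega
  · rintro (⟨j', ⟨h1, h2⟩, rfl, rfl⟩ | ⟨i', ⟨h1, h2⟩, rfl, rfl⟩)
    · exact ⟨YoungDiagram.mem_iff_lt_rowLen.mpr h2, by omega⟩
    · exact ⟨YoungDiagram.mem_iff_lt_colLen.mpr h2, by omega⟩

/-- If λ is an m-asymmetric partition (Frobenius coordinates (α | α+m)),
then 2(k(λ) - k(λ')) = m·|λ|, where k(μ) = Σ_i (i-1)μ_i (the sum over cells of the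
0-based row index) and |λ| is the number of cells. -/
theorem two_mul_k_sub_k_conj (m : ℕ) (μ : YoungDiagram) (h : μ.IsAsymmetric m) :
    2 * ((∑ u ∈ μ.cells, (u.1 : ℤ)) - ∑ u ∈ μ.transpose.cells, (u.1 : ℤ)) =
      (m : ℤ) * μ.cells.card := by
  -- transpose sum = sum of second coordinates
  have htr : (∑ u ∈ μ.transpose.cells, (u.1 : ℤ)) = ∑ u ∈ μ.cells, (u.2 : ℤ) := by
    apply Finset.sum_nbij' (fun u => Prod.swap u) (fun u => Prod.swap u) <;>
      simp [YoungDiagram.mem_transpose, YoungDiagram.mem_cells]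
  rw [htr, ← Finset.sum_sub_distrib]
  -- fiberwise decomposition by min
  have hmaps : ∀ u ∈ μ.cells, min u.1 u.2 ∈ Finset.range (μ.colLen 0) := by
    rintro ⟨i, j⟩ hu
    simp only [Finset.mem_range]
    have h1 : i < μ.colLen j := YoungDiagram.mem_iff_lt_colLen.mp (μ.mem_cells _ |>.mp hu)
    have h2 : μ.colLen j ≤ μ.colLen 0 := μ.colLen_anti 0 j (Nat.zero_le _)
    omega
  rw [← Finset.sum_fiberwise_of_maps_to hmaps (fun u => (u.1 : ℤ) - u.2),
    Finset.card_eq_sum_card_fiberwise hmaps]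
  push_cast
  rw [Finset.mul_sum, Finset.mul_sum]
  apply Finset.sum_congr rfl
  intro r _
  rw [fiber_eq]
  by_cases hd : (r, r) ∈ μ
  · have hA : r < μ.rowLen r := YoungDiagram.mem_iff_lt_rowLen.mp hd
    have hL : μ.colLen r = μ.rowLen r + m := h r hd
    have hdisj : Disjoint ((Finset.Ico r (μ.rowLen r)).image fun j => (r, j))
        ((Finset.Ico (r+1) (μ.colLen r)).image fun i => (i, r)) := by
      simp only [Finset.disjoint_left, Finset.mem_image, Finset.mem_Ico]
      rintro ⟨a, b⟩ ⟨j, hj, rfl, rfl⟩ ⟨i, hi, hie, -⟩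
      omega
    rw [Finset.sum_union hdisj, Finset.card_union_of_disjoint hdisj,
      Finset.sum_image (by simp), Finset.sum_image (by simp),
      Finset.card_image_of_injective _ (by intro x y hxy; simpa using hxy),
      Finset.card_image_of_injective _ (by intro x y hxy; simpa using hxy)]
    have e1 : ∑ j ∈ Finset.Ico r (μ.rowLen r), ((r : ℤ) - j) =
        - ∑ t ∈ Finset.range (μ.rowLen r - r), (t : ℤ) := by
      rw [Finset.sum_Ico_eq_sum_range]
      rw [← Finset.sum_neg_distrib]
      apply Finset.sum_congr rfl
      intro t _
      push_cast
      ring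
    have e2 : ∑ i ∈ Finset.Ico (r+1) (μ.colLen r), ((i : ℤ) - r) =
        ∑ t ∈ Finset.range (μ.colLen r - (r+1)), ((t : ℤ) + 1) := by
      rw [Finset.sum_Ico_eq_sum_range]
      apply Finset.sum_congr rfl
      intro t _
      push_cast
      ring
    rw [e1, e2]
    obtain ⟨a, ha⟩ : ∃ a, μ.rowLen r = r + 1 + a := ⟨μ.rowLen r - (r+1), by omega⟩
    have hrsub : μ.rowLen r - r = a + 1 := by omega
    have hcsub : μ.colLen r - (r+1) = a + m := by omega
    rw [Nat.card_Ico, Nat.card_Ico, hrsub, hcsub, Finset.sum_add_distrib]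
    simp only [Finset.sum_const, Finset.card_range, nsmul_eq_mul, mul_one]
    have G1 := gauss (a+1)
    have G2 := gauss (a+m)
    push_cast at G1 G2 ⊢
    linear_combination G2 - G1
  · have h1 : μ.rowLen r ≤ r := by
      by_contra hc
      exact hd (YoungDiagram.mem_iff_lt_rowLen.mpr (by omega))
    have h2 : μ.colLen r ≤ r := by
      by_contra hc
      exact hd (YoungDiagram.mem_iff_lt_colLen.mpr (by omega))
    rw [Finset.Ico_eq_empty (by omega), Finset.Ico_eq_empty (by omega)]
    simp
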